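/- Let X be a finite set with |X| = m, P a probability distribution on X with full support, ρ ∈ (0,∞), α = 1/(1+ρ), and G : X → {1,…,m} an arbitrary bijection. Define Q_G(x) = G(x)^{-1/α} / ∑_{x'} G(x')^{-1/α}. Then (1/ρ)·log(∑_x P(x)·G(x)^ρ) ≥ H_α(P) + I_α(P, Q_G) − log(1 + ln m). -/

import Mathlib

open Real Finset

theorem stmt12 {X : Type*} [Fintype X]
    (m : ℕ) (hm : Fintype.card X = m)
    (P : X → ℝ) (hP : ∀ x, 0 < P x) (hPsum : ∑ x, P x = 1)
    (ρ : ℝ) (hρ : 0 < ρ) (α : ℝ) (hα : α = 1 / (1 + ρ))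
    (G : X → ℕ) (hGmem : ∀ x, G x ∈ Finset.Icc 1 m)
    (hGinj : Function.Injective G)
    (QG : X → ℝ)
    (hQG : ∀ x, QG x = (G x : ℝ) ^ (-(1 / α)) /
        ∑ x', (G x' : ℝ) ^ (-(1 / α))) :
    (1 / ρ) * Real.logb 2 (∑ x, P x * (G x : ℝ) ^ ρ) ≥
      (1 / (1 - α)) * Real.logb 2 (∑ x, P x ^ α)
      + ((α / (1 - α)) * Real.logb 2
          (∑ x, P x * (∑ x', (QG x' / QG x) ^ α) ^ ((1 - α) / α))
        - (1 / (1 - α)) * Real.logb 2 (∑ x, P x ^ α))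
      - Real.logb 2 (1 + Real.log m) := by
  have h1ρ : (0:ℝ) < 1 + ρ := by linarith
  have hα0 : 0 < α := by rw [hα]; positivity
  have hα1 : α < 1 := by
    rw [hα, div_lt_one h1ρ]; linarith
  have hαne : α ≠ 0 := ne_of_gt hα0
  rcases Nat.eq_zero_or_pos m with hm0 | hm1
  · subst hm0
    have hX : IsEmpty X := Fintype.card_eq_zero_iff.mp hm
    simp
  · have hXne : Nonempty X := Fintype.card_pos_iff.mp (by rw [hm]; exact hm1)
    have hG0 : ∀ x, (0:ℝ) < (G x : ℝ) := by
      intro x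
      have h := Finset.mem_Icc.mp (hGmem x)
      exact_mod_cast Nat.lt_of_lt_of_le Nat.zero_lt_one h.1
    set C : ℝ := ∑ x', ((G x' : ℝ))⁻¹ with hCdef
    set T : ℝ := ∑ x, P x * (G x : ℝ) ^ ρ with hTdef
    have hC0 : 0 < C :=
      Finset.sum_pos (fun x _ => inv_pos.mpr (hG0 x)) Finset.univ_nonempty
    have hT0 : 0 < T :=
      Finset.sum_pos (fun x _ => mul_pos (hP x) (Real.rpow_pos_of_pos (hG0 x) ρ))
        Finset.univ_nonempty
    set D : ℝ := ∑ x', (G x' : ℝ) ^ (-(1/α)) with hDdef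
    have hD0 : 0 < D :=
      Finset.sum_pos (fun x _ => Real.rpow_pos_of_pos (hG0 x) _) Finset.univ_nonempty
    have hratio : ∀ x x' : X, (QG x' / QG x) ^ α = (G x : ℝ) * ((G x' : ℝ))⁻¹ := by
      intro x x'
      have h1 : QG x' / QG x = (G x' : ℝ) ^ (-(1/α)) / (G x : ℝ) ^ (-(1/α)) := by
        rw [hQG, hQG]
        exact div_div_div_cancel_right₀ (ne_of_gt hD0) _ _
      have he : -(1/α) * α = -1 := by field_simp
      rw [h1, Real.div_rpow (Real.rpow_nonneg (hG0 x').le _) (Real.rpow_nonneg (hG0 x).le _),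
        ← Real.rpow_mul (hG0 x').le, ← Real.rpow_mul (hG0 x).le, he,
        Real.rpow_neg_one, Real.rpow_neg_one, div_eq_mul_inv, inv_inv, mul_comm]
    have hexp : (1 - α) / α = ρ := by
      rw [hα]; field_simp; ring
    have hinv : α / (1 - α) = 1 / ρ := by
      rw [← hexp, one_div, inv_div]
    have hSx : ∀ x : X, ∑ x', (QG x' / QG x) ^ α = (G x : ℝ) * C := by
      intro x
      rw [hCdef, Finset.mul_sum]
      exact Finset.sum_congr rfl fun x' _ => hratio x x'
    have hsum2 : (∑ x, P x * (∑ x', (QG x' / QG x) ^ α) ^ ((1 - α) / α)) = C ^ ρ * T := by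
      rw [hexp, hTdef, Finset.mul_sum]
      refine Finset.sum_congr rfl fun x _ => ?_
      rw [hSx x, Real.mul_rpow (hG0 x).le hC0.le]
      ring
    have hlog : Real.logb 2 (C ^ ρ * T) = ρ * Real.logb 2 C + Real.logb 2 T := by
      rw [Real.logb_mul (by positivity) (ne_of_gt hT0),
        Real.logb_rpow_eq_mul_logb_of_pos hC0]
    -- bound C by the harmonic number
    have himg : Finset.image G Finset.univ = Finset.Icc 1 m := by
      apply Finset.eq_of_subset_of_card_le
      · intro i hi
        obtain ⟨x, _, rfl⟩ := Finset.mem_image.mp hi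
        exact hGmem x
      · rw [Finset.card_image_of_injective _ hGinj, Finset.card_univ, hm, Nat.card_Icc]
        omega
    have hCeq : C = ((harmonic m : ℚ) : ℝ) := by
      rw [hCdef, harmonic_eq_sum_Icc, ← himg,
        Finset.sum_image (fun x _ y _ h => hGinj h)]
      push_cast
      rfl
    have hCle : C ≤ 1 + Real.log m := by
      rw [hCeq]; exact harmonic_le_one_add_log m
    have hlogm : (0:ℝ) < 1 + Real.log m := by
      have : (0:ℝ) ≤ Real.log m := Real.log_nonneg (by exact_mod_cast hm1)
      linarith
    have key : Real.logb 2 C ≤ Real.logb 2 (1 + Real.log m) :=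
      Real.logb_le_logb_of_le (by norm_num) hC0 hCle
    rw [hsum2, hinv, hlog]
    have h2 : (1/ρ) * (ρ * Real.logb 2 C + Real.logb 2 T)
        = Real.logb 2 C + (1/ρ) * Real.logb 2 T := by
      field_simp
    rw [h2]
    linarith
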